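/- arXiv:1103.5772 — 11 statements merged into one kernel-verified Lean document; each statement's English description precedes it below -/
import Mathlib

section
/- Let n ≥ 2 and let x_1, x_2, …, x_n be pairwise distinct complex roots of the algebraic equation x^n = a_1 x^{n-1} + a_2 x^{n-2} + … + a_n (with complex coefficients a_1, …, a_n and a_n ≠ 0). Suppose x_1 is real and |x_1| > |x_i| for every i ≥ 2. Then the ratio p_m(x_1,…,x_n) / p_{m-1}(x_1,…,x_n) of consecutive complete homogeneous symmetric polynomials of the roots tends to x_1 as m → ∞ (in particular p_{m-1}(x_1,…,x_n) ≠ 0 for all sufficiently large m). -/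
open Filter

/-- The complete homogeneous symmetric polynomial of degree `m` in the
variables `x 0, …, x (n-1)`:  `p_m = Σ_{α_1+…+α_n = m} x_1^{α_1} ⋯ x_n^{α_n}`. -/
noncomputable def completeHomog {R : Type*} [CommSemiring R] (n m : ℕ) (x : Fin n → R) : R :=
  ∑ α ∈ Finset.Nat.antidiagonalTuple n m, ∏ i, x i ^ α i

open Finset in
lemma prod_erase_succAbove {n : ℕ} (p : Fin (n+1)) (g : Fin (n+1) → ℂ) :
    ∏ j ∈ Finset.univ.erase p, g j = ∏ i : Fin n, g (p.succAbove i) := by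
  have himg : Finset.univ.erase p = Finset.image p.succAbove Finset.univ := by
    ext j
    simp only [Finset.mem_erase, Finset.mem_univ, and_true, Finset.mem_image, true_and]
    constructor
    · intro hj
      obtain ⟨i, hi⟩ := Fin.exists_succAbove_eq hj
      exact ⟨i, hi⟩
    · rintro ⟨i, -, rfl⟩
      exact Fin.succAbove_ne p i
  rw [himg, Finset.prod_image (fun a _ b _ h => Fin.succAbove_right_injective h)]

lemma lagrange_pow {n : ℕ} (y : Fin (n+1) → ℂ) (hy : Function.Injective y) (t : ℂ) :
    ∑ i, y i ^ n * ((∏ j ∈ Finset.univ.erase i, (t - y j)) /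
      (∏ j ∈ Finset.univ.erase i, (y i - y j))) = t ^ n := by
  have hdeg : ((Polynomial.X : Polynomial ℂ) ^ n).degree < (Finset.univ : Finset (Fin (n+1))).card := by
    simp [Polynomial.degree_X_pow]
    exact_mod_cast Nat.lt_succ_self n
  have h := Lagrange.eq_interpolate (v := y) (s := Finset.univ)
    (f := (Polynomial.X : Polynomial ℂ) ^ n) hy.injOn hdeg
  have h2 := congrArg (Polynomial.eval t) h
  rw [Polynomial.eval_pow, Polynomial.eval_X] at h2
  rw [Lagrange.interpolate_apply] at h2
  rw [Polynomial.eval_finset_sum] at h2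
  refine Eq.trans (Finset.sum_congr rfl fun i _ => ?_) h2.symm
  rw [Polynomial.eval_mul, Polynomial.eval_C]
  congr 1
  · simp
  unfold Lagrange.basis
  rw [Polynomial.eval_prod, ← Finset.prod_div_distrib]
  refine Finset.prod_congr rfl fun j _ => ?_
  unfold Lagrange.basisDivisor
  rw [Polynomial.eval_mul, Polynomial.eval_C, Polynomial.eval_sub, Polynomial.eval_X,
    Polynomial.eval_C]
  rw [div_eq_mul_inv, mul_comm]
lemma completeHomog_succ (n m : ℕ) (x : Fin (n+1) → ℂ) :
    completeHomog (n+1) m x =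
      ∑ p ∈ Finset.HasAntidiagonal.antidiagonal m, x 0 ^ p.1 * completeHomog n p.2 (x ∘ Fin.succ) := by
  unfold completeHomog
  simp_rw [Finset.mul_sum]
  rw [Finset.sum_sigma']
  refine Finset.sum_nbij' (fun α => ⟨(α 0, m - α 0), fun i => α i.succ⟩)
    (fun p => Fin.cons p.1.1 p.2) ?_ ?_ ?_ ?_ ?_
  · intro α hα
    rw [Finset.Nat.mem_antidiagonalTuple] at hα
    simp only [Finset.mem_sigma, Finset.HasAntidiagonal.mem_antidiagonal, Finset.Nat.mem_antidiagonalTuple]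
    have h : α 0 + ∑ i : Fin n, α i.succ = m := by rw [← hα, Fin.sum_univ_succ]
    exact ⟨by omega, by omega⟩
  · intro p hp
    simp only [Finset.mem_sigma, Finset.HasAntidiagonal.mem_antidiagonal, Finset.Nat.mem_antidiagonalTuple] at hp
    rw [Finset.Nat.mem_antidiagonalTuple, Fin.sum_univ_succ]
    simp [hp.2, hp.1]
  · intro α hα
    exact (Fin.cons_self_tail α)
  · intro p hp
    simp only [Finset.mem_sigma, Finset.HasAntidiagonal.mem_antidiagonal, Finset.Nat.mem_antidiagonalTuple] at hp
    have h2 : ∑ i, p.2 i = p.1.2 := hp.2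
    have h1 := hp.1
    ext
    · simp
    · simp [h2]; omega
    · simp
  · intro α hα
    rw [Fin.prod_univ_succ]
    simp

lemma completeHomog_eq (n : ℕ) : ∀ (x : Fin (n+1) → ℂ), Function.Injective x → ∀ m : ℕ,
    completeHomog (n+1) m x =
      ∑ i, x i ^ (m + n) / ∏ j ∈ Finset.univ.erase i, (x i - x j) := by
  induction n with
  | zero =>
    intro x hx m
    unfold completeHomog
    rw [Finset.Nat.antidiagonalTuple_one, Finset.sum_singleton]
    simp
  | succ n ih =>
    intro x hx m
    set t := x 0 with ht
    set y : Fin (n+1) → ℂ := x ∘ Fin.succ with hy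
    have hyinj : Function.Injective y := hx.comp (Fin.succ_injective _)
    have htne : ∀ i, t ≠ y i := fun i h => Fin.succ_ne_zero i (hx h).symm
    have hD : ∀ i, (∏ j ∈ Finset.univ.erase i, (y i - y j)) ≠ 0 := fun i =>
      Finset.prod_ne_zero_iff.2 fun j hj =>
        sub_ne_zero.2 fun h => (Finset.mem_erase.1 hj).1 (hyinj h).symm
    have hP : (∏ i, (t - y i)) ≠ 0 := Finset.prod_ne_zero_iff.2 fun i _ => sub_ne_zero.2 (htne i)
    rw [completeHomog_succ]
    calc ∑ p ∈ Finset.HasAntidiagonal.antidiagonal m, x 0 ^ p.1 * completeHomog (n+1) p.2 (x ∘ Fin.succ)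
        = ∑ p ∈ Finset.HasAntidiagonal.antidiagonal m, ∑ i, t ^ p.1 *
            (y i ^ (p.2 + n) / ∏ j ∈ Finset.univ.erase i, (y i - y j)) := by
          refine Finset.sum_congr rfl fun p _ => ?_
          rw [ih _ hyinj, Finset.mul_sum]
      _ = ∑ i, ∑ p ∈ Finset.HasAntidiagonal.antidiagonal m, t ^ p.1 *
            (y i ^ (p.2 + n) / ∏ j ∈ Finset.univ.erase i, (y i - y j)) := Finset.sum_comm
      _ = ∑ i, (y i ^ (m + (n+1)) / ((y i - t) * ∏ j ∈ Finset.univ.erase i, (y i - y j))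
            + (t ^ (m+1) * (y i ^ n * ((∏ j ∈ Finset.univ.erase i, (t - y j)) /
              (∏ j ∈ Finset.univ.erase i, (y i - y j))))) / (∏ j, (t - y j))) := by
          refine Finset.sum_congr rfl fun i _ => ?_
          set D := ∏ j ∈ Finset.univ.erase i, (y i - y j) with hDdef
          have hDne := hD i
          have htyne : t - y i ≠ 0 := sub_ne_zero.2 (htne i)
          have hPi : (t - y i) * (∏ j ∈ Finset.univ.erase i, (t - y j)) = ∏ j, (t - y j) :=
            Finset.mul_prod_erase Finset.univ (fun j => t - y j) (Finset.mem_univ i)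
          have hgeom : ∑ p ∈ Finset.HasAntidiagonal.antidiagonal m, t ^ p.1 * y i ^ p.2
              = (t ^ (m+1) - y i ^ (m+1)) / (t - y i) := by
            rw [Finset.Nat.sum_antidiagonal_eq_sum_range_succ_mk]
            rw [eq_div_iff htyne, ← geom_sum₂_mul t (y i) (m+1)]
            congr 1
          have : ∑ p ∈ Finset.HasAntidiagonal.antidiagonal m, t ^ p.1 *
              (y i ^ (p.2 + n) / D) = (y i ^ n / D) * ((t ^ (m+1) - y i ^ (m+1)) / (t - y i)) := by
            rw [← hgeom, Finset.mul_sum]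
            refine Finset.sum_congr rfl fun p _ => ?_
            rw [pow_add]
            field_simp
          have hyt : y i - t ≠ 0 := sub_ne_zero.2 (htne i).symm
          rw [this, ← hPi]
          have hPe : (∏ j ∈ Finset.univ.erase i, (t - y j)) ≠ 0 := by
            rw [← hPi] at hP
            exact fun h => hP (by rw [h, mul_zero])
          field_simp
          ring
      _ = (∑ i, y i ^ (m + (n+1)) / ((y i - t) * ∏ j ∈ Finset.univ.erase i, (y i - y j)))
            + t ^ (m + (n+1)) / (∏ j, (t - y j)) := by
          rw [Finset.sum_add_distrib]
          congr 1
          rw [← Finset.sum_div, ← Finset.mul_sum, lagrange_pow y hyinj t, ← pow_add]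
          congr 2
          omega
      _ = ∑ i : Fin (n+2), x i ^ (m + (n+1)) / ∏ j ∈ Finset.univ.erase i, (x i - x j) := by
          have hsplit : ∑ i : Fin (n+2), x i ^ (m + (n+1)) / ∏ j ∈ Finset.univ.erase i, (x i - x j)
              = x 0 ^ (m+(n+1)) / ∏ j ∈ Finset.univ.erase (0 : Fin (n+2)), (x 0 - x j)
                + ∑ i : Fin (n+1), x i.succ ^ (m+(n+1)) / ∏ j ∈ Finset.univ.erase i.succ, (x i.succ - x j) :=
            Fin.sum_univ_succ _
          rw [hsplit, add_comm]
          congr 1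
          · -- head term
            rw [prod_erase_succAbove (0 : Fin (n+2)) (fun j => x 0 - x j)]
            simp only [Fin.zero_succAbove]
            rfl
          · refine Finset.sum_congr rfl fun i _ => ?_
            congr 1
            rw [prod_erase_succAbove (Fin.succ i) (fun j => x i.succ - x j)]
            rw [Fin.prod_univ_succ]
            rw [Fin.succ_succAbove_zero]
            congr 1
            rw [prod_erase_succAbove i (fun j => y i - y j)]
            refine Finset.prod_congr rfl fun j _ => ?_
            rw [Fin.succ_succAbove_succ]
            rfl

open Finset in
theorem ratio_completeHomog_tendsto_dominant_root
    (n : ℕ) (hn : 2 ≤ n) (a : Fin n → ℂ) (x : Fin n → ℂ)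
    (ha : a ⟨n - 1, by omega⟩ ≠ 0)
    (hinj : Function.Injective x)
    (hroot : ∀ i, (x i) ^ n = ∑ j : Fin n, a j * (x i) ^ (n - 1 - (j : ℕ)))
    (hreal : (x ⟨0, by omega⟩).im = 0)
    (hdom : ∀ i, i ≠ ⟨0, by omega⟩ → ‖x i‖ < ‖x ⟨0, by omega⟩‖) :
    (∀ᶠ m in atTop, completeHomog n m x ≠ 0) ∧
      Tendsto (fun m : ℕ => completeHomog n (m + 1) x / completeHomog n m x)
        atTop (nhds (x ⟨0, by omega⟩)) := by
  obtain ⟨N, rfl⟩ : ∃ N, n = N + 1 := ⟨n - 1, by omega⟩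
  have h0 : (⟨0, by omega⟩ : Fin (N+1)) = 0 := rfl
  rw [h0] at hreal hdom ⊢
  set r := x (0 : Fin (N+1)) with hr
  -- r ≠ 0
  have hr0 : r ≠ 0 := by
    intro h
    have h1 := hroot 0
    rw [← hr, h, zero_pow (Nat.succ_ne_zero N)] at h1
    have h2 : ∑ j : Fin (N+1), a j * (0:ℂ) ^ (N + 1 - 1 - (j:ℕ)) = a (Fin.last N) := by
      rw [Finset.sum_eq_single (Fin.last N)]
      · simp
      · intro j _ hj
        have hjN : (j:ℕ) ≠ N := fun hh => hj (Fin.ext hh)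
        have hlt := j.isLt
        rw [zero_pow (by omega), mul_zero]
      · simp
    rw [h2] at h1
    exact ha h1.symm
  have hE : ∀ i : Fin (N+1), (∏ j ∈ Finset.univ.erase i, (x i - x j)) ≠ 0 := fun i =>
    Finset.prod_ne_zero_iff.2 fun j hj =>
      sub_ne_zero.2 fun h => (Finset.mem_erase.1 hj).1 (hinj h).symm
  set E : Fin (N+1) → ℂ := fun i => ∏ j ∈ Finset.univ.erase i, (x i - x j) with hEdef
  set g : ℕ → ℂ := fun m => ∑ i, (x i / r) ^ (m + N) / E i with hg
  have key : ∀ m, completeHomog (N+1) m x = r ^ (m + N) * g m := by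
    intro m
    rw [completeHomog_eq N x hinj m, hg, Finset.mul_sum]
    refine Finset.sum_congr rfl fun i _ => ?_
    rw [div_pow]
    have hrn : r ^ (m+N) ≠ 0 := pow_ne_zero _ hr0
    field_simp
    rfl
  have glim : Tendsto g atTop (nhds ((E 0)⁻¹)) := by
    have : ((E 0)⁻¹ : ℂ) = ∑ i : Fin (N+1), if i = 0 then (E 0)⁻¹ else 0 := by
      rw [Finset.sum_ite_eq' Finset.univ (0 : Fin (N+1)) (fun _ => (E 0)⁻¹)]
      simp
    rw [this]
    refine tendsto_finset_sum _ fun i _ => ?_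
    by_cases hi : i = 0
    · subst hi
      simp only [if_pos rfl]
      have : (fun m : ℕ => (x 0 / r) ^ (m + N) / E 0) = fun _ => (E 0)⁻¹ := by
        funext m
        rw [← hr, div_self hr0, one_pow, one_div]
      rw [this]
      exact tendsto_const_nhds
    · simp only [if_neg hi]
      have hnorm : ‖x i / r‖ < 1 := by
        rw [norm_div, div_lt_one (by
          have := hdom i hi
          exact lt_of_le_of_lt (norm_nonneg _) this)]
        have := hdom i hi
        simpa using this
      have h1 : Tendsto (fun k : ℕ => (x i / r) ^ k) atTop (nhds 0) :=
        tendsto_pow_atTop_nhds_zero_of_norm_lt_one hnorm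
      have h2 : Tendsto (fun m : ℕ => (x i / r) ^ (m + N)) atTop (nhds 0) :=
        h1.comp (tendsto_add_atTop_nat N)
      have := h2.div_const (E i)
      rwa [zero_div] at this
  have hgne : ∀ᶠ m in atTop, g m ≠ 0 := glim.eventually_ne (inv_ne_zero (hE 0))
  constructor
  · filter_upwards [hgne] with m hm
    rw [key m]
    exact mul_ne_zero (pow_ne_zero _ hr0) hm
  · have hfun : (fun m : ℕ => completeHomog (N+1) (m + 1) x / completeHomog (N+1) m x)
        = fun m => r * (g (m+1) / g m) := by
      funext m
      rw [key (m+1), key m]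
      have he : m + 1 + N = m + N + 1 := by omega
      rw [he, pow_succ, mul_div_mul_comm, mul_div_cancel_left₀ _ (pow_ne_zero (m+N) hr0)]
    rw [hfun]
    have glim' : Tendsto (fun m => g (m+1)) atTop (nhds ((E 0)⁻¹)) :=
      glim.comp (tendsto_add_atTop_nat 1)
    have := (glim'.div glim (inv_ne_zero (hE 0))).const_mul r
    rwa [div_self (inv_ne_zero (hE 0)), mul_one] at this
end

section
/- Let n ≥ 1 and let m be a positive real number. Then the real number x = m^{n−1} + m^{n−2}·(m^n+1)^{1/n} + m^{n−3}·(m^n+1)^{2/n} + … + m·(m^n+1)^{(n−2)/n} + (m^n+1)^{(n−1)/n}, i.e. x = Σ_{i=0}^{n−1} m^{n−1−i} ((m^n+1)^{1/n})^i, satisfies the algebraic equation x^n = C(n,1) m^{n−1} x^{n−1} + C(n,2) m^{n−2} x^{n−2} + … + C(n,n−1) m x + C(n,n). -/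
/-- The `(n, m^n+1)`-form
`x = m^{n-1} + m^{n-2}(m^n+1)^{1/n} + … + m (m^n+1)^{(n-2)/n} + (m^n+1)^{(n-1)/n}`
satisfies `x^n = C(n,1) m^{n-1} x^{n-1} + C(n,2) m^{n-2} x^{n-2} + … + C(n,n)`. -/
theorem form_plus_satisfies_binomial_equation
    (n : ℕ) (hn : 1 ≤ n) (m : ℝ) (hm : 0 < m) :
    (∑ i ∈ Finset.range n,
        m ^ (n - 1 - i) * ((m ^ n + 1) ^ ((1 : ℝ) / (n : ℝ))) ^ i) ^ n
      = ∑ i ∈ Finset.range n,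
          (n.choose (i + 1) : ℝ) * m ^ (n - 1 - i) *
            (∑ t ∈ Finset.range n,
              m ^ (n - 1 - t) * ((m ^ n + 1) ^ ((1 : ℝ) / (n : ℝ))) ^ t) ^ (n - 1 - i) := by
  have hb : (0:ℝ) < m ^ n + 1 := by positivity
  set r : ℝ := (m ^ n + 1) ^ ((1 : ℝ) / (n : ℝ)) with hr_def
  have hn0 : (n : ℝ) ≠ 0 := by positivity
  have hrpow : r ^ n = m ^ n + 1 := by
    rw [hr_def, ← Real.rpow_natCast ((m ^ n + 1) ^ ((1 : ℝ) / (n : ℝ))) n,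
      ← Real.rpow_mul hb.le, one_div, inv_mul_cancel₀ hn0, Real.rpow_one]
  have hrpos : 0 < r := Real.rpow_pos_of_pos hb _
  set x : ℝ := ∑ t ∈ Finset.range n, m ^ (n - 1 - t) * r ^ t with hx_def
  have hxpos : 0 < x := by
    apply Finset.sum_pos (fun i _ => by positivity)
    exact ⟨0, Finset.mem_range.mpr (by omega)⟩
  have hgeom : x * (r - m) = 1 := by
    have := geom_sum₂_mul r m n
    rw [hrpow] at this
    rw [hx_def]
    rw [show (∑ t ∈ Finset.range n, m ^ (n - 1 - t) * r ^ t)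
        = ∑ t ∈ Finset.range n, r ^ t * m ^ (n - 1 - t) by
      exact Finset.sum_congr rfl fun t _ => mul_comm _ _]
    linarith
  have hr_eq : r = m + x⁻¹ := by
    have hx : x ≠ 0 := hxpos.ne'
    field_simp
    nlinarith [hgeom]
  -- binomial expansion
  have hexp : (m + x⁻¹) ^ n = m ^ n + 1 := by rw [← hr_eq, hrpow]
  rw [add_pow] at hexp
  have key : ∑ k ∈ Finset.range n, (n.choose k : ℝ) * m ^ k * x ^ k = x ^ n := by
    have h2 := congrArg (· * x ^ n) hexp
    simp only [Finset.sum_mul, add_mul, one_mul] at h2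
    have h3 : ∀ k ∈ Finset.range (n + 1),
        m ^ k * x⁻¹ ^ (n - k) * (n.choose k : ℝ) * x ^ n
          = (n.choose k : ℝ) * m ^ k * x ^ k := by
      intro k hk
      have hk' : k ≤ n := by simpa using Nat.lt_succ_iff.mp (Finset.mem_range.mp hk)
      have : x⁻¹ ^ (n - k) * x ^ n = x ^ k := by
        rw [inv_pow, inv_mul_eq_div, div_eq_iff (pow_ne_zero _ hxpos.ne'), ← pow_add]
        congr 1; omega
      calc m ^ k * x⁻¹ ^ (n - k) * (n.choose k : ℝ) * x ^ n
          = (n.choose k : ℝ) * m ^ k * (x⁻¹ ^ (n - k) * x ^ n) := by ring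
        _ = (n.choose k : ℝ) * m ^ k * x ^ k := by rw [this]
    rw [Finset.sum_congr rfl h3, Finset.sum_range_succ] at h2
    simp only [Nat.choose_self, Nat.cast_one, one_mul] at h2
    linarith
  have hrhs : (∑ i ∈ Finset.range n, (n.choose (i + 1) : ℝ) * m ^ (n - 1 - i) * x ^ (n - 1 - i))
      = ∑ k ∈ Finset.range n, (n.choose k : ℝ) * m ^ k * x ^ k := by
    rw [← Finset.sum_range_reflect (fun k => (n.choose k : ℝ) * m ^ k * x ^ k) n]
    apply Finset.sum_congr rfl
    intro i hi
    have hi' : i < n := Finset.mem_range.mp hi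
    have : n.choose (n - 1 - i) = n.choose (i + 1) := by
      rw [show n - 1 - i = n - (i + 1) by omega, Nat.choose_symm (by omega)]
    rw [this]
  rw [hrhs, key]
end

section
/- Let n ≥ 1 and let m be a real number with m^n > 1. Then the real number x = m^{n−1} + m^{n−2}·(m^n−1)^{1/n} + m^{n−3}·(m^n−1)^{2/n} + … + m·(m^n−1)^{(n−2)/n} + (m^n−1)^{(n−1)/n}, i.e. x = Σ_{i=0}^{n−1} m^{n−1−i} ((m^n−1)^{1/n})^i, satisfies the algebraic equation x^n = C(n,1) m^{n−1} x^{n−1} − C(n,2) m^{n−2} x^{n−2} + … + (−1)^{n−2} C(n,n−1) m x + (−1)^{n−1} C(n,n), i.e. x^n = Σ_{i=1}^{n} (−1)^{i−1} C(n,i) m^{n−i} x^{n−i}. -/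
/-- The `(n, m^n-1)`-form
`x = m^{n-1} + m^{n-2}(m^n-1)^{1/n} + … + m (m^n-1)^{(n-2)/n} + (m^n-1)^{(n-1)/n}`
satisfies `x^n = Σ_{i=1}^{n} (-1)^{i-1} C(n,i) m^{n-i} x^{n-i}`. -/
theorem form_minus_satisfies_binomial_equation
    (n : ℕ) (hn : 1 ≤ n) (m : ℝ) (hm : 1 < m ^ n) :
    (∑ i ∈ Finset.range n,
        m ^ (n - 1 - i) * ((m ^ n - 1) ^ ((1 : ℝ) / (n : ℝ))) ^ i) ^ n
      = ∑ i ∈ Finset.range n,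
          (-1 : ℝ) ^ i * (n.choose (i + 1) : ℝ) * m ^ (n - 1 - i) *
            (∑ t ∈ Finset.range n,
              m ^ (n - 1 - t) * ((m ^ n - 1) ^ ((1 : ℝ) / (n : ℝ))) ^ t) ^ (n - 1 - i) := by
  have h0 : (0:ℝ) ≤ m ^ n - 1 := by linarith
  set r : ℝ := (m ^ n - 1) ^ ((1 : ℝ) / (n : ℝ)) with hrdef
  have hr : r ^ n = m ^ n - 1 := by
    rw [hrdef, one_div, Real.rpow_inv_natCast_pow h0 (by omega)]
  set x : ℝ := ∑ i ∈ Finset.range n, m ^ (n - 1 - i) * r ^ i with hxdef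
  have hx1 : x * (r - m) = -1 := by
    calc x * (r - m)
        = (∑ i ∈ Finset.range n, r ^ i * m ^ (n - 1 - i)) * (r - m) := by
          rw [hxdef]; congr 1
          exact Finset.sum_congr rfl (fun i _ => mul_comm _ _)
      _ = r ^ n - m ^ n := geom_sum₂_mul r m n
      _ = -1 := by rw [hr]; ring
  have hxr : x * r = m * x - 1 := by linear_combination hx1
  have key : (m * x - 1) ^ n = (m ^ n - 1) * x ^ n := by
    rw [← hxr, mul_pow, hr]; ring
  have expand : (m * x - 1) ^ n
      = ∑ k ∈ Finset.range (n + 1), (m * x) ^ k * (-1 : ℝ) ^ (n - k) * (n.choose k : ℝ) := by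
    have h := add_pow (m * x) (-1 : ℝ) n
    rw [show m * x + (-1 : ℝ) = m * x - 1 by ring] at h
    exact h
  have split : ∑ k ∈ Finset.range (n + 1), (m * x) ^ k * (-1 : ℝ) ^ (n - k) * (n.choose k : ℝ)
      = (∑ k ∈ Finset.range n, (m * x) ^ k * (-1 : ℝ) ^ (n - k) * (n.choose k : ℝ))
        + (m * x) ^ n := by
    rw [Finset.sum_range_succ]; simp
  have reflect : (∑ i ∈ Finset.range n,
        (-1 : ℝ) ^ i * (n.choose (i + 1) : ℝ) * m ^ (n - 1 - i) * x ^ (n - 1 - i))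
      = ∑ j ∈ Finset.range n, -((m * x) ^ j * (-1 : ℝ) ^ (n - j) * (n.choose j : ℝ)) := by
    rw [← Finset.sum_range_reflect]
    apply Finset.sum_congr rfl
    intro j hj
    have hj' : j < n := Finset.mem_range.mp hj
    have e1 : n - 1 - (n - 1 - j) = j := by omega
    have e2 : n - 1 - j + 1 = n - j := by omega
    have e3 : n.choose (n - j) = n.choose j := Nat.choose_symm (by omega)
    have e4 : n - j = (n - 1 - j) + 1 := by omega
    rw [e1, e2, e3, e4, pow_succ, mul_pow]
    ring
  rw [reflect, Finset.sum_neg_distrib]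
  have hsum : ∑ j ∈ Finset.range n, (m * x) ^ j * (-1 : ℝ) ^ (n - j) * (n.choose j : ℝ)
      = (m ^ n - 1) * x ^ n - (m * x) ^ n := by
    have := expand.symm.trans key
    rw [split] at this
    linarith
  rw [hsum, mul_pow]
  ring
end

section
/- Let n ≥ 2 and let m be a positive real number. Set a_1 = C(n,1) m^{n−1} and a_i = C(n,i) m^{n−i} for i = 2, …, n, and define the sequence (P_k) by P_0 = 1, P_k = 0 for −n+1 ≤ k < 0, and P_k = a_1 P_{k−1} + a_2 P_{k−2} + … + a_n P_{k−n} for k ≥ 1. Then the ratios P_k / P_{k−1} converge, as k → ∞, to the (n, m^n+1)-form Σ_{i=0}^{n−1} m^{n−1−i} ((m^n+1)^{1/n})^i. -/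
open Filter Finset Complex

/-- geometric sum of a nontrivial power of a primitive root of unity vanishes -/
lemma RF_sum_prim_pow {n : ℕ} {ζ : ℂ} (hζ : IsPrimitiveRoot ζ n)
    {p : ℕ} (hp : 0 < p) (hpn : p < n) :
    ∑ j ∈ range n, (ζ ^ p) ^ j = 0 := by
  have h1 : ζ ^ p ≠ 1 := hζ.pow_ne_one_of_pos_of_lt hp.ne' hpn
  have h2 : (ζ ^ p) ^ n = 1 := by
    rw [← pow_mul, mul_comm, pow_mul, hζ.pow_eq_one, one_pow]
  rw [geom_sum_eq h1, h2, sub_self, zero_div]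

/-- real part of a unit complex number other than 1 is < 1 -/
lemma RF_re_lt_one {z : ℂ} (h1 : ‖z‖ = 1) (hz : z ≠ 1) : z.re < 1 := by
  have habs' : ‖z‖ = 1 := by exact h1
  rcases lt_or_eq_of_le (Complex.re_le_norm z) with h | h
  · rwa [habs'] at h
  · exfalso
    apply hz
    have habs : ‖z‖ = 1 := by exact h1
    have hre : z.re = 1 := by rw [h, habs]
    have him : z.im = 0 := by
      have := Complex.sq_norm z
      rw [habs, Complex.normSq_apply, hre] at this
      nlinarith
    exact Complex.ext (by simp [hre]) (by simp [him])

/-- The rational truncations of the 1-periodic recurrent fraction of order `n` with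
coefficients `a_1 = C(n,1) m^{n-1}, a_i = C(n,i) m^{n-i}` converge to the
`(n, m^n+1)`-form `m^{n-1} + m^{n-2}(m^n+1)^{1/n} + … + (m^n+1)^{(n-1)/n}`. -/
theorem recurrent_fraction_tendsto_form_plus
    (n : ℕ) (hn : 2 ≤ n) (m : ℝ) (hm : 0 < m)
    (P : ℤ → ℝ)
    (hP0 : P 0 = 1)
    (hPneg : ∀ k : ℤ, 1 - (n : ℤ) ≤ k → k < 0 → P k = 0)
    (hPrec : ∀ k : ℤ, 1 ≤ k →
      P k = ∑ j : Fin n,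
        (n.choose ((j : ℕ) + 1) : ℝ) * m ^ (n - 1 - (j : ℕ)) * P (k - ((j : ℕ) + 1))) :
    Tendsto (fun k : ℕ => P ((k : ℤ) + 1) / P (k : ℤ)) atTop
      (nhds (∑ i ∈ Finset.range n,
        m ^ (n - 1 - i) * ((m ^ n + 1) ^ ((1 : ℝ) / (n : ℝ))) ^ i)) := by
  have hn0 : n ≠ 0 := by omega
  have hnR : (n : ℝ) ≠ 0 := Nat.cast_ne_zero.mpr hn0
  have hmn1 : (0:ℝ) < m ^ n + 1 := by positivity
  set β : ℝ := (m ^ n + 1) ^ ((1 : ℝ) / (n : ℝ)) with hβdef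
  have hβpos : 0 < β := Real.rpow_pos_of_pos hmn1 _
  have hβpow : β ^ n = m ^ n + 1 := by
    rw [hβdef, ← Real.rpow_natCast ((m ^ n + 1) ^ ((1:ℝ)/(n:ℝ))) n,
      ← Real.rpow_mul hmn1.le, one_div, inv_mul_cancel₀ hnR, Real.rpow_one]
  have hmβ : m < β := by
    refine lt_of_pow_lt_pow_left₀ n hβpos.le ?_
    rw [hβpow]; linarith
  set ζ : ℂ := Complex.exp (2 * Real.pi * Complex.I / n) with hζdef
  have hζ : IsPrimitiveRoot ζ n := Complex.isPrimitiveRoot_exp n hn0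
  have hζnorm : ‖ζ‖ = 1 := Complex.norm_eq_one_of_pow_eq_one hζ.pow_eq_one hn0
  set w : ℕ → ℂ := fun j => (β : ℂ) * ζ ^ j - (m : ℂ) with hwdef
  have hznorm : ∀ j : ℕ, ‖(β : ℂ) * ζ ^ j‖ = β := by
    intro j
    rw [norm_mul, norm_pow, hζnorm, one_pow, mul_one, Complex.norm_real,
      Real.norm_eq_abs, abs_of_pos hβpos]
  have hwlow : ∀ j : ℕ, β - m ≤ ‖w j‖ := by
    intro j
    have := norm_sub_norm_le ((β : ℂ) * ζ ^ j) (m : ℂ)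
    rwa [hznorm, Complex.norm_real, Real.norm_eq_abs, abs_of_pos hm] at this
  have hwne : ∀ j : ℕ, w j ≠ 0 := by
    intro j
    refine norm_pos_iff.mp ?_
    exact lt_of_lt_of_le (by linarith) (hwlow j)
  have hzeta : ∀ j s : ℕ, (ζ ^ (s + 1)) ^ j = (ζ ^ j) ^ s * ζ ^ j := by
    intro j s
    rw [← pow_mul, ← pow_mul, ← pow_add]
    congr 1
    ring
  -- each 1/(w j) is a root of the characteristic equation
  have hroot : ∀ j : ℕ, ∑ i : Fin n,
      (n.choose ((i : ℕ) + 1) : ℂ) * (m : ℂ) ^ (n - 1 - (i : ℕ)) * (w j) ^ ((i : ℕ) + 1) = 1 := by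
    intro j
    have hzn : ((w j) + (m : ℂ)) ^ n = (m : ℂ) ^ n + 1 := by
      have h1 : w j + (m : ℂ) = (β : ℂ) * ζ ^ j := by rw [hwdef]; ring
      have h2 : ((β : ℂ)) ^ n = (m : ℂ) ^ n + 1 := by exact_mod_cast congrArg (Complex.ofReal) hβpow
      rw [h1, mul_pow, ← pow_mul, mul_comm j n, pow_mul, hζ.pow_eq_one, one_pow, mul_one, h2]
    have hb := add_pow (w j) (m : ℂ) n
    rw [Finset.sum_range_succ', hzn] at hb
    simp only [pow_zero, one_mul, Nat.sub_zero, Nat.choose_zero_right, Nat.cast_one, mul_one] at hb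
    rw [Fin.sum_univ_eq_sum_range
      (fun i => (n.choose (i + 1) : ℂ) * (m : ℂ) ^ (n - 1 - i) * (w j) ^ (i + 1))]
    have hcongr : ∀ i ∈ range n,
        (n.choose (i + 1) : ℂ) * (m : ℂ) ^ (n - 1 - i) * (w j) ^ (i + 1)
          = (w j) ^ (i + 1) * (m : ℂ) ^ (n - (i + 1)) * (n.choose (i + 1) : ℂ) := by
      intro i _
      rw [show n - 1 - i = n - (i + 1) by omega]
      ring
    rw [Finset.sum_congr rfl hcongr]
    linear_combination -hb
  set D : ℂ := (n : ℂ) * (β : ℂ) ^ n with hDdef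
  have hD : D ≠ 0 := by
    rw [hDdef]
    exact mul_ne_zero (Nat.cast_ne_zero.mpr hn0)
      (pow_ne_zero _ (by exact_mod_cast hβpos.ne'))
  set Q : ℤ → ℂ := fun k => D⁻¹ * ∑ j ∈ range n, (β : ℂ) * ζ ^ j * (w j) ^ (-(k + 1)) with hQdef
  have hsumD : ∑ j ∈ range n, (β : ℂ) * ζ ^ j * (w j)⁻¹ = D := by
    have hinv : ∀ j ∈ range n, (β : ℂ) * ζ ^ j * (w j)⁻¹
        = ∑ s ∈ range n, (β : ℂ) ^ (s + 1) * (ζ ^ (s + 1)) ^ j * (m : ℂ) ^ (n - 1 - s) := by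
      intro j _
      have hx : ((β : ℂ) * ζ ^ j) ^ n = (m : ℂ) ^ n + 1 := by
        have h2 : ((β : ℂ)) ^ n = (m : ℂ) ^ n + 1 := by
          exact_mod_cast congrArg (Complex.ofReal) hβpow
        rw [mul_pow, ← pow_mul, mul_comm j n, pow_mul, hζ.pow_eq_one, one_pow, mul_one, h2]
      have hg := geom_sum₂_mul ((β : ℂ) * ζ ^ j) (m : ℂ) n
      rw [hx] at hg
      have hg1 : (∑ s ∈ range n, ((β : ℂ) * ζ ^ j) ^ s * (m : ℂ) ^ (n - 1 - s)) * (w j) = 1 := by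
        rw [hwdef]; rw [hg]; ring
      have hwinv : (w j)⁻¹ = ∑ s ∈ range n, ((β : ℂ) * ζ ^ j) ^ s * (m : ℂ) ^ (n - 1 - s) :=
        inv_eq_of_mul_eq_one_left hg1
      rw [hwinv, Finset.mul_sum]
      refine Finset.sum_congr rfl fun s _ => ?_
      rw [mul_pow, hzeta j s]
      ring
    rw [Finset.sum_congr rfl hinv, Finset.sum_comm]
    have hzero : ∀ s ∈ range (n - 1),
        ∑ j ∈ range n, (β : ℂ) ^ (s + 1) * (ζ ^ (s + 1)) ^ j * (m : ℂ) ^ (n - 1 - s) = 0 := by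
      intro s hs
      have hs' : s < n - 1 := mem_range.mp hs
      have : ∑ j ∈ range n, (ζ ^ (s + 1)) ^ j = 0 :=
        RF_sum_prim_pow hζ (Nat.succ_pos s) (by omega)
      rw [← Finset.sum_mul, ← Finset.mul_sum, this]
      ring
    have hn1 : n = (n - 1) + 1 := by omega
    rw [hn1, Finset.sum_range_succ, ← hn1]
    rw [Finset.sum_eq_zero hzero, zero_add]
    have hlast : ∀ j ∈ range n, (β : ℂ) ^ n * (ζ ^ n) ^ j
        * (m : ℂ) ^ (n - 1 - (n - 1)) = (β : ℂ) ^ n := by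
      intro j _
      rw [hζ.pow_eq_one, one_pow, Nat.sub_self, pow_zero, mul_one, mul_one]
    rw [Finset.sum_congr rfl hlast, Finset.sum_const, Finset.card_range, nsmul_eq_mul, hDdef]
  have hQ0 : Q 0 = 1 := by
    have : Q 0 = D⁻¹ * ∑ j ∈ range n, (β : ℂ) * ζ ^ j * (w j)⁻¹ := by
      rw [hQdef]
      norm_num
    rw [this, hsumD, inv_mul_cancel₀ hD]
  have hQnegNat : ∀ r : ℕ, r + 2 ≤ n → ∑ j ∈ range n, (β : ℂ) * ζ ^ j * (w j) ^ r = 0 := by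
    intro r hr
    have hterm : ∀ j ∈ range n, (β : ℂ) * ζ ^ j * (w j) ^ r
        = ∑ s ∈ range (r + 1), (β : ℂ) ^ (s + 1) * (ζ ^ (s + 1)) ^ j
            * ((-(m : ℂ)) ^ (r - s) * ((r.choose s : ℂ))) := by
      intro j _
      have hwj : w j = (β : ℂ) * ζ ^ j + (-(m : ℂ)) := by rw [hwdef]; ring
      rw [hwj, add_pow, Finset.mul_sum]
      refine Finset.sum_congr rfl fun s _ => ?_
      rw [mul_pow, hzeta j s]
      ring
    rw [Finset.sum_congr rfl hterm, Finset.sum_comm]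
    refine Finset.sum_eq_zero fun s hs => ?_
    have hs' : s < r + 1 := mem_range.mp hs
    have hzsum : ∑ j ∈ range n, (ζ ^ (s + 1)) ^ j = 0 :=
      RF_sum_prim_pow hζ (Nat.succ_pos s) (by omega)
    calc ∑ j ∈ range n, (β : ℂ) ^ (s + 1) * (ζ ^ (s + 1)) ^ j
          * ((-(m : ℂ)) ^ (r - s) * ((r.choose s : ℂ)))
        = (∑ j ∈ range n, (ζ ^ (s + 1)) ^ j)
            * ((β : ℂ) ^ (s + 1) * ((-(m : ℂ)) ^ (r - s) * ((r.choose s : ℂ)))) := by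
          rw [Finset.sum_mul]
          exact Finset.sum_congr rfl fun j _ => by ring
      _ = 0 := by rw [hzsum, zero_mul]
  have hQneg : ∀ k : ℤ, 1 - (n : ℤ) ≤ k → k < 0 → Q k = 0 := by
    intro k hk1 hk2
    have hr : -(k + 1) = (((-(k + 1)).toNat : ℕ) : ℤ) := (Int.toNat_of_nonneg (by omega)).symm
    set r : ℕ := (-(k + 1)).toNat with hrdef
    have hrn : r + 2 ≤ n := by omega
    have hexp : ∀ j, (w j) ^ (-(k + 1)) = (w j) ^ r := by
      intro j
      rw [hr, zpow_natCast]
    have : Q k = D⁻¹ * ∑ j ∈ range n, (β : ℂ) * ζ ^ j * (w j) ^ r := by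
      rw [hQdef]
      exact congrArg (D⁻¹ * ·) (Finset.sum_congr rfl fun j _ => by rw [hexp j])
    rw [this, hQnegNat r hrn, mul_zero]
  have hQrec : ∀ k : ℤ, Q k = ∑ i : Fin n,
      (n.choose ((i : ℕ) + 1) : ℂ) * (m : ℂ) ^ (n - 1 - (i : ℕ)) * Q (k - ((i : ℕ) + 1)) := by
    intro k
    have key : ∀ j : ℕ, ∑ i : Fin n, (n.choose ((i : ℕ) + 1) : ℂ) * (m : ℂ) ^ (n - 1 - (i : ℕ))
        * (w j) ^ (-(k - (((i : ℕ) : ℤ) + 1) + 1)) = (w j) ^ (-(k + 1)) := by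
      intro j
      have hsplit : ∀ i : Fin n, (w j) ^ (-(k - (((i : ℕ) : ℤ) + 1) + 1))
          = (w j) ^ ((i : ℕ) + 1) * (w j) ^ (-(k + 1)) := by
        intro i
        rw [← zpow_natCast (w j) ((i : ℕ) + 1), ← zpow_add₀ (hwne j)]
        congr 1
        push_cast
        ring
      calc ∑ i : Fin n, (n.choose ((i : ℕ) + 1) : ℂ) * (m : ℂ) ^ (n - 1 - (i : ℕ))
            * (w j) ^ (-(k - (((i : ℕ) : ℤ) + 1) + 1))
          = (∑ i : Fin n, (n.choose ((i : ℕ) + 1) : ℂ) * (m : ℂ) ^ (n - 1 - (i : ℕ))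
              * (w j) ^ ((i : ℕ) + 1)) * (w j) ^ (-(k + 1)) := by
            rw [Finset.sum_mul]
            exact Finset.sum_congr rfl fun i _ => by rw [hsplit i]; ring
        _ = (w j) ^ (-(k + 1)) := by rw [hroot j, one_mul]
    have expand : ∀ i : Fin n, Q (k - (((i : ℕ) : ℤ) + 1))
        = D⁻¹ * ∑ j ∈ range n, (β : ℂ) * ζ ^ j * (w j) ^ (-(k - (((i : ℕ) : ℤ) + 1) + 1)) :=
      fun i => rfl
    calc Q k = D⁻¹ * ∑ j ∈ range n, (β : ℂ) * ζ ^ j * (w j) ^ (-(k + 1)) := rfl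
      _ = D⁻¹ * ∑ j ∈ range n, (β : ℂ) * ζ ^ j
            * ∑ i : Fin n, (n.choose ((i : ℕ) + 1) : ℂ) * (m : ℂ) ^ (n - 1 - (i : ℕ))
              * (w j) ^ (-(k - (((i : ℕ) : ℤ) + 1) + 1)) := by
          congr 1
          exact Finset.sum_congr rfl fun j _ => by rw [key j]
      _ = ∑ i : Fin n, (n.choose ((i : ℕ) + 1) : ℂ) * (m : ℂ) ^ (n - 1 - (i : ℕ))
            * Q (k - (((i : ℕ) : ℤ) + 1)) := by
          simp only [expand, Finset.mul_sum]
          rw [Finset.sum_comm]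
          exact Finset.sum_congr rfl fun i _ => Finset.sum_congr rfl fun j _ => by ring
  have hPQ : ∀ k : ℕ, (P k : ℂ) = Q k := by
    intro k
    induction k using Nat.strong_induction_on with
    | _ k ih =>
      rcases Nat.eq_zero_or_pos k with rfl | hk
      · rw [Nat.cast_zero, hP0, hQ0, Complex.ofReal_one]
      · have h1 : (1 : ℤ) ≤ (k : ℤ) := by exact_mod_cast hk
        rw [hPrec k h1, hQrec (k : ℤ)]
        push_cast
        refine Finset.sum_congr rfl fun i _ => ?_
        congr 1
        rcases le_or_gt (((i : ℕ) : ℤ) + 1) (k : ℤ) with h | h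
        · have hle : (i : ℕ) + 1 ≤ k := by exact_mod_cast h
          have hcast : ((k : ℤ) - (((i : ℕ) : ℤ) + 1)) = ((k - ((i : ℕ) + 1) : ℕ) : ℤ) := by
            push_cast [hle]
            ring
          rw [hcast]
          exact ih _ (by omega)
        · have hneg : (k : ℤ) - (((i : ℕ) : ℤ) + 1) < 0 := by omega
          have hi : ((i : ℕ) : ℤ) + 1 ≤ (n : ℤ) := by exact_mod_cast i.isLt
          have hlow : 1 - (n : ℤ) ≤ (k : ℤ) - (((i : ℕ) : ℤ) + 1) := by omega
          rw [hPneg _ hlow hneg, hQneg _ hlow hneg, Complex.ofReal_zero]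
  -- strict domination of the root j = 0
  have hstrict : ∀ j : ℕ, 0 < j → j < n → β - m < ‖w j‖ := by
    intro j hj hjn
    have hzne : ζ ^ j ≠ 1 := hζ.pow_ne_one_of_pos_of_lt hj.ne' hjn
    have hznorm1 : ‖ζ ^ j‖ = 1 := by rw [norm_pow, hζnorm, one_pow]
    have hre : (ζ ^ j).re < 1 := RF_re_lt_one hznorm1 hzne
    have hu : (ζ ^ j).re ^ 2 + (ζ ^ j).im ^ 2 = 1 := by
      have h1 : Complex.normSq (ζ ^ j) = 1 := by
        rw [← Complex.sq_norm, hznorm1, one_pow]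
      rw [Complex.normSq_apply] at h1
      nlinarith [h1]
    have hwre : (w j).re = β * (ζ ^ j).re - m := by
      rw [hwdef]
      simp [Complex.sub_re, Complex.mul_re]
    have hwim : (w j).im = β * (ζ ^ j).im := by
      rw [hwdef]
      simp [Complex.sub_im, Complex.mul_im]
    have hnorm2 : ‖w j‖ ^ 2 = (w j).re ^ 2 + (w j).im ^ 2 := by
      rw [Complex.sq_norm, Complex.normSq_apply]
      ring
    have hsq : (β - m) ^ 2 < ‖w j‖ ^ 2 := by
      rw [hnorm2, hwre, hwim]
      have hid : (β * (ζ ^ j).re - m) ^ 2 + (β * (ζ ^ j).im) ^ 2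
          = (β - m) ^ 2 + 2 * β * m * (1 - (ζ ^ j).re) := by
        linear_combination (β ^ 2) * hu
      rw [hid]
      have := mul_pos (mul_pos hβpos hm) (sub_pos.mpr hre)
      linarith
    exact lt_of_pow_lt_pow_left₀ 2 (norm_nonneg _) hsq
  have hw0 : w 0 = ((β - m : ℝ) : ℂ) := by
    rw [hwdef]; push_cast; ring
  have hw0norm : ‖w 0‖ = β - m := by
    rw [hw0, Complex.norm_real, Real.norm_eq_abs, abs_of_pos (by linarith)]
  set A : ℕ → ℂ := fun k => Q k * (w 0) ^ (k + 1) with hAdef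
  have hAform : ∀ k : ℕ, A k = D⁻¹ * ∑ j ∈ range n, (β : ℂ) * ζ ^ j * (w 0 / w j) ^ (k + 1) := by
    intro k
    have hz : ∀ j : ℕ, (w j) ^ (-((k : ℤ) + 1)) = ((w j) ^ (k + 1))⁻¹ := by
      intro j
      rw [show -((k : ℤ) + 1) = -(((k + 1 : ℕ) : ℤ)) by push_cast; ring, zpow_neg, zpow_natCast]
    calc A k = (D⁻¹ * ∑ j ∈ range n, (β : ℂ) * ζ ^ j * (w j) ^ (-((k : ℤ) + 1)))
          * (w 0) ^ (k + 1) := rfl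
      _ = D⁻¹ * ∑ j ∈ range n, (β : ℂ) * ζ ^ j * (w 0 / w j) ^ (k + 1) := by
          rw [mul_assoc, Finset.sum_mul]
          congr 1
          refine Finset.sum_congr rfl fun j _ => ?_
          rw [hz j, div_pow]
          ring
  have hA : Tendsto A atTop (nhds (D⁻¹ * β)) := by
    have hterm : ∀ j ∈ range n, Tendsto (fun k : ℕ => (β : ℂ) * ζ ^ j * (w 0 / w j) ^ (k + 1))
        atTop (nhds (if j = 0 then (β : ℂ) else 0)) := by
      intro j hj
      rcases eq_or_ne j 0 with rfl | hj0
      · have : ∀ k : ℕ, (β : ℂ) * ζ ^ 0 * (w 0 / w 0) ^ (k + 1) = (β : ℂ) := by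
          intro k
          rw [pow_zero, div_self (hwne 0), one_pow, mul_one, mul_one]
        simp only [if_pos rfl]
        exact tendsto_const_nhds.congr fun k => (this k).symm
      · have hlt : ‖w 0 / w j‖ < 1 := by
          rw [norm_div, hw0norm, div_lt_one (lt_of_le_of_lt (by linarith) (hstrict j (Nat.pos_of_ne_zero hj0) (mem_range.mp hj)))]
          exact hstrict j (Nat.pos_of_ne_zero hj0) (mem_range.mp hj)
        have h0 := tendsto_pow_atTop_nhds_zero_of_norm_lt_one hlt
        have h1 := (h0.comp (tendsto_add_atTop_nat 1)).const_mul ((β : ℂ) * ζ ^ j)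
        rw [mul_zero] at h1
        rw [if_neg hj0]
        exact h1
    have hsum := tendsto_finset_sum (range n) hterm
    have hval : ∑ j ∈ range n, (if j = 0 then (β : ℂ) else 0) = (β : ℂ) := by
      rw [Finset.sum_ite_eq' (range n) 0 (fun _ => (β : ℂ))]
      rw [if_pos (mem_range.mpr (by omega))]
    rw [hval] at hsum
    exact (hsum.const_mul D⁻¹).congr fun k => (hAform k).symm
  have hc0 : D⁻¹ * (β : ℂ) ≠ 0 :=
    mul_ne_zero (inv_ne_zero hD) (by exact_mod_cast hβpos.ne')
  have hratio : Tendsto (fun k : ℕ => A (k + 1) / A k) atTop (nhds 1) := by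
    have := (hA.comp (tendsto_add_atTop_nat 1)).div hA hc0
    rwa [div_self hc0] at this
  have heq : ∀ k : ℕ, A (k + 1) / A k = ((P ((k : ℤ) + 1) / P (k : ℤ) : ℝ) : ℂ) * w 0 := by
    intro k
    have e1 : A (k + 1) = (Q ((k : ℤ) + 1) * w 0) * (w 0) ^ (k + 1) := by
      have : A (k + 1) = Q (((k + 1 : ℕ) : ℤ)) * (w 0) ^ (k + 1 + 1) := rfl
      rw [this, show (((k + 1 : ℕ) : ℤ)) = (k : ℤ) + 1 by push_cast; ring, pow_succ]
      ring
    have e2 : A k = Q (k : ℤ) * (w 0) ^ (k + 1) := rfl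
    rw [e1, e2, mul_div_mul_right _ _ (pow_ne_zero (k + 1) (hwne 0))]
    have e3 : Q ((k : ℤ) + 1) = ((P ((k : ℤ) + 1) : ℝ) : ℂ) := by
      rw [show ((k : ℤ) + 1) = (((k + 1 : ℕ) : ℤ)) by push_cast; ring]
      exact (hPQ (k + 1)).symm
    rw [e3, ← hPQ k]
    push_cast
    ring
  have hfin : Tendsto (fun k : ℕ => ((P ((k : ℤ) + 1) / P (k : ℤ) : ℝ) : ℂ)) atTop
      (nhds ((w 0)⁻¹)) := by
    have h2 : Tendsto (fun k : ℕ => ((P ((k : ℤ) + 1) / P (k : ℤ) : ℝ) : ℂ) * w 0) atTop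
        (nhds 1) := by
      apply hratio.congr
      intro k; rw [heq k]
    have h3 := h2.mul_const ((w 0)⁻¹)
    rw [one_mul] at h3
    apply h3.congr
    intro k
    rw [mul_assoc, mul_inv_cancel₀ (hwne 0), mul_one]
  -- identify the limit
  have hL : (∑ i ∈ Finset.range n, m ^ (n - 1 - i) * β ^ i) = (β - m)⁻¹ := by
    have hg := geom_sum₂_mul β m n
    rw [hβpow] at hg
    have hg1 : (∑ i ∈ range n, β ^ i * m ^ (n - 1 - i)) * (β - m) = 1 := by
      rw [hg]; ring
    have hcomm : (∑ i ∈ Finset.range n, m ^ (n - 1 - i) * β ^ i)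
        = ∑ i ∈ range n, β ^ i * m ^ (n - 1 - i) := by
      exact Finset.sum_congr rfl (fun i _ => mul_comm _ _)
    rw [hcomm]
    exact eq_inv_of_mul_eq_one_left hg1
  rw [hL]
  rw [← Filter.tendsto_ofReal_iff]
  have : (((β - m)⁻¹ : ℝ) : ℂ) = (w 0)⁻¹ := by rw [hw0]; push_cast; ring
  rw [this]
  exact hfin
end

section
/- For every integer n ≥ 2 and every integer m, the determinant of the (m^n−1)-twisted circulant matrix X(n, m^n−1, s) with s_i = m^{n−1−i} for i = 0, …, n−1 (i.e. s = (m^{n−1}, m^{n−2}, …, m, 1)) equals 1. -/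
/-- The `M`-twisted circulant matrix `X(n, M, s)`: the `n × n` matrix whose `(i, j)`
entry equals `s (i - j)` if `j ≤ i` and `M * s (n + i - j)` if `j > i`. -/
def twistedCirc {R : Type*} [CommRing R] (n : ℕ) (M : R) (s : ℕ → R) :
    Matrix (Fin n) (Fin n) R :=
  Matrix.of fun i j =>
    if (j : ℕ) ≤ (i : ℕ) then s ((i : ℕ) - (j : ℕ)) else M * s (n + (i : ℕ) - (j : ℕ))

def Emat (n : ℕ) (m : ℤ) : Matrix (Fin n) (Fin n) ℤ :=
  Matrix.of fun i j => if j = i then 1 else if (j : ℕ) = (i : ℕ) + 1 then -m else 0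

def Wmat (n : ℕ) (m : ℤ) : Matrix (Fin n) (Fin n) ℤ :=
  Matrix.of fun i j => if (i : ℕ) = 0 then m ^ (j : ℕ) else if j = i then -1 else 0

lemma det_Emat (n : ℕ) (m : ℤ) : (Emat n m).det = 1 := by
  rw [Matrix.det_of_upperTriangular]
  · simp [Emat]
  · intro i j hij
    have hij' : (j : ℕ) < (i : ℕ) := hij
    have h1 : j ≠ i := Fin.ne_of_lt hij
    have h2 : (j : ℕ) ≠ (i : ℕ) + 1 := by omega
    simp [Emat, h1, h2]

lemma det_Wmat (n : ℕ) (m : ℤ) : (Wmat (n + 1) m).det = (-1) ^ n := by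
  rw [Matrix.det_of_upperTriangular]
  · have : ∀ i : Fin (n + 1), Wmat (n + 1) m i i = if i = 0 then 1 else -1 := by
      intro i
      rcases eq_or_ne i 0 with rfl | hi
      · simp [Wmat]
      · have : (i : ℕ) ≠ 0 := by intro h; apply hi; ext; simp [h]
        simp [Wmat, this, hi]
    rw [Finset.prod_congr rfl fun i _ => this i]
    rw [Fin.prod_univ_succ]
    simp [Fin.succ_ne_zero]
  · intro i j hij
    have hij' : (j : ℕ) < (i : ℕ) := hij
    have h1 : (i : ℕ) ≠ 0 := by omega
    have h2 : j ≠ i := Fin.ne_of_lt hij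
    simp only [Wmat, Matrix.of_apply, if_neg h1, if_neg h2]

lemma Emat_mul (k : ℕ) (m : ℤ) :
    Emat (k + 1) m * twistedCirc (k + 1) (m ^ (k + 1) - 1) (fun i => m ^ (k + 1 - 1 - i)) =
      (Wmat (k + 1) m).submatrix (finRotate (k + 1)) id := by
  ext i j
  rw [Matrix.mul_apply]
  have hjk : (j : ℕ) ≤ k := by omega
  by_cases hi : i = Fin.last k
  · subst hi
    rw [Finset.sum_eq_single (Fin.last k)]
    · have hcoe : (finRotate (k + 1) (Fin.last k) : ℕ) = 0 := by
        simp [coe_finRotate]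
      have hji : (j : ℕ) ≤ (Fin.last k : ℕ) := by simp only [Fin.val_last]; omega
      have hE : Emat (k+1) m (Fin.last k) (Fin.last k) = 1 := by simp [Emat]
      have hX : twistedCirc (k + 1) (m ^ (k + 1) - 1) (fun i => m ^ (k + 1 - 1 - i))
          (Fin.last k) j = m ^ (j : ℕ) := by
        simp only [twistedCirc, Matrix.of_apply, if_pos hji]
        congr 1
        simp only [Fin.val_last]
        omega
      have hWv : (Wmat (k + 1) m).submatrix (finRotate (k + 1)) id (Fin.last k) j
          = m ^ (j : ℕ) := by
        simp only [Matrix.submatrix_apply, Wmat, Matrix.of_apply, id_eq]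
        rw [if_pos hcoe]
      rw [hE, hX, hWv, one_mul]
    · intro x _ hx
      have h1 : x ≠ Fin.last k := hx
      have h2 : (x : ℕ) ≠ k + 1 := by have := x.isLt; omega
      simp [Emat, h1, h2]
    · simp
  · have hi' : (i : ℕ) < k := by
      have h1 := i.isLt
      have h2 : (i : ℕ) ≠ k := fun h => hi (Fin.ext (by simp [Fin.last, h]))
      omega
    set i' : Fin (k + 1) := ⟨(i : ℕ) + 1, by omega⟩ with hi'def
    have hne : i ≠ i' := by simp [Fin.ext_iff, hi'def]
    have hsum : ∑ kk, Emat (k+1) m i kk *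
        twistedCirc (k + 1) (m ^ (k + 1) - 1) (fun i => m ^ (k + 1 - 1 - i)) kk j
        = Emat (k+1) m i i * twistedCirc (k + 1) (m ^ (k + 1) - 1) (fun i => m ^ (k + 1 - 1 - i)) i j
          + Emat (k+1) m i i' * twistedCirc (k + 1) (m ^ (k + 1) - 1) (fun i => m ^ (k + 1 - 1 - i)) i' j := by
      have h0 : ∀ x ∈ Finset.univ, x ∉ ({i, i'} : Finset (Fin (k+1))) →
          Emat (k+1) m i x * twistedCirc (k + 1) (m ^ (k + 1) - 1) (fun i => m ^ (k + 1 - 1 - i)) x j = 0 := by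
        intro x _ hx
        simp only [Finset.mem_insert, Finset.mem_singleton, not_or] at hx
        have h2 : (x : ℕ) ≠ (i : ℕ) + 1 := fun h => hx.2 (Fin.ext (by simp [hi'def, h]))
        simp [Emat, hx.1, h2]
      rw [← Finset.sum_subset (Finset.subset_univ {i, i'}) h0, Finset.sum_pair hne]
    rw [hsum]
    have hEii : Emat (k+1) m i i = 1 := by simp [Emat]
    have hEii' : Emat (k+1) m i i' = -m := by
      simp only [Emat, Matrix.of_apply, if_neg (Ne.symm hne), if_pos (show (i' : ℕ) = (i : ℕ) + 1 from rfl)]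
    have hcoe : (finRotate (k + 1) i : ℕ) = (i : ℕ) + 1 :=
      coe_finRotate_of_ne_last hi
    have hW : (Wmat (k + 1) m).submatrix (finRotate (k + 1)) id i j
        = if (j : ℕ) = (i : ℕ) + 1 then -1 else 0 := by
      simp only [Matrix.submatrix_apply, id, Wmat, Matrix.of_apply, hcoe]
      rw [if_neg (by omega)]
      by_cases hj : (j : ℕ) = (i : ℕ) + 1
      · rw [if_pos (Fin.ext (by rw [hcoe]; omega)), if_pos hj]
      · rw [if_neg (fun h => hj (by rw [← hcoe, h])), if_neg hj]
    rw [hW, hEii, hEii', one_mul]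
    have hi'val : (i' : ℕ) = (i : ℕ) + 1 := rfl
    rcases lt_trichotomy (j : ℕ) ((i : ℕ) + 1) with hj | hj | hj
    · -- j ≤ i
      have hji : (j : ℕ) ≤ (i : ℕ) := by omega
      have hji' : (j : ℕ) ≤ (i : ℕ) + 1 := by omega
      simp only [twistedCirc, Matrix.of_apply, if_pos hji, if_pos hji', hi'val]
      rw [if_neg (by omega)]
      have he : k + 1 - 1 - ((i : ℕ) - (j : ℕ)) = (k + 1 - 1 - ((i : ℕ) + 1 - (j : ℕ))) + 1 := by
        omega
      rw [he, pow_succ]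
      ring
    · -- j = i + 1
      have hji : ¬ (j : ℕ) ≤ (i : ℕ) := by omega
      have hji' : (j : ℕ) ≤ (i : ℕ) + 1 := by omega
      simp only [twistedCirc, Matrix.of_apply, if_neg hji, if_pos hji', hi'val]
      rw [if_pos hj]
      have e1 : k + 1 - 1 - (k + 1 + (i : ℕ) - (j : ℕ)) = 0 := by omega
      have e2 : k + 1 - 1 - ((i : ℕ) + 1 - (j : ℕ)) = k := by omega
      rw [e1, e2, pow_zero]
      have : m ^ (k + 1) = m ^ k * m := pow_succ m k
      rw [this]; ring
    · -- j > i + 1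
      have hji : ¬ (j : ℕ) ≤ (i : ℕ) := by omega
      have hji' : ¬ (j : ℕ) ≤ (i : ℕ) + 1 := by omega
      simp only [twistedCirc, Matrix.of_apply, if_neg hji, if_neg hji', hi'val]
      rw [if_neg (by omega)]
      have he : k + 1 - 1 - (k + 1 + (i : ℕ) - (j : ℕ))
          = (k + 1 - 1 - (k + 1 + ((i : ℕ) + 1) - (j : ℕ))) + 1 := by omega
      rw [he, pow_succ]
      ring

/-- `(m^{n-1}, m^{n-2}, …, m, 1)` solves `|F(n, m^n - 1)| = 1`. -/
theorem det_twistedCirc_pow_minus_one (n : ℕ) (hn : 2 ≤ n) (m : ℤ) :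
    (twistedCirc n (m ^ n - 1) (fun i => m ^ (n - 1 - i))).det = 1 := by
  obtain ⟨k, rfl⟩ : ∃ k, n = k + 2 := ⟨n - 2, by omega⟩
  have h := congrArg Matrix.det (Emat_mul (k + 1) m)
  rw [Matrix.det_mul, det_Emat, one_mul, Matrix.det_permute, sign_finRotate,
    det_Wmat] at h
  rw [h]
  push_cast
  rw [← pow_add]
  exact Even.neg_one_pow ⟨k + 1, rfl⟩
end

section
/- For every integer n ≥ 2 and every integer m, the determinant of the (m^{2n−1}+1)-twisted circulant matrix X(2n−1, m^{2n−1}+1, s) with s_i = m^{2n−2−i} for i = 0, …, 2n−2 (i.e. s = (m^{2n−2}, m^{2n−3}, …, m, 1)) equals 1. -/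
/-- Row operation matrix: identity plus `-m` on the superdiagonal. -/
def Lmat (k : ℕ) (m : ℤ) : Matrix (Fin (2*k+1)) (Fin (2*k+1)) ℤ :=
  Matrix.of fun i j => if (i:ℕ) = (j:ℕ) then 1 else if (j:ℕ) = (i:ℕ)+1 then -m else 0

/-- The result of the row operations: rows `e_{i+1}` and a last row of powers of `m`. -/
def Pmat (k : ℕ) (m : ℤ) : Matrix (Fin (2*k+1)) (Fin (2*k+1)) ℤ :=
  Matrix.of fun i j => if (i:ℕ) < 2*k then (if (j:ℕ) = (i:ℕ)+1 then 1 else 0) else m^(j:ℕ)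

lemma Lmat_det (k : ℕ) (m : ℤ) : (Lmat k m).det = 1 := by
  rw [Matrix.det_of_upperTriangular]
  · apply Finset.prod_eq_one
    intro i _
    simp [Lmat]
  · intro i j hlt
    have h : (j:ℕ) < (i:ℕ) := hlt
    simp only [Lmat, Matrix.of_apply]
    rw [if_neg (by omega), if_neg (by omega)]

lemma Pmat_det (k : ℕ) (m : ℤ) : (Pmat k m).det = 1 := by
  have hval : ∀ i : Fin (2*k+1), ((finRotate (2*k+1)) i : ℕ)
      = if (i:ℕ) = 2*k then 0 else (i:ℕ)+1 := by
    intro i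
    rw [finRotate_succ_apply, Fin.val_add_one]
    by_cases h : i = Fin.last (2*k)
    · rw [if_pos h, if_pos (by simp [h, Fin.last])]
    · rw [if_neg h, if_neg (by simpa [Fin.ext_iff, Fin.last] using h)]
  have htri : ((Pmat k m).submatrix id (finRotate (2*k+1))).BlockTriangular OrderDual.toDual := by
    intro i j hij
    have hlt : (i:ℕ) < (j:ℕ) := hij
    have hj2 : (j:ℕ) < 2*k+1 := j.isLt
    simp only [Matrix.submatrix_apply, id_eq, Pmat, Matrix.of_apply]
    rcases Nat.lt_or_ge (j:ℕ) (2*k) with h | h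
    · have hv : ((finRotate (2*k+1)) j : ℕ) = (j:ℕ)+1 := by
        rw [hval j, if_neg (by omega)]
      rw [if_pos (by omega), hv, if_neg (by omega)]
    · have h0 : (j:ℕ) = 2*k := by omega
      have hv : ((finRotate (2*k+1)) j : ℕ) = 0 := by
        rw [hval j, if_pos h0]
      rw [if_pos (by omega), hv, if_neg (by omega)]
  have hdet := Matrix.det_of_lowerTriangular _ htri
  have hdiag : ∏ i, ((Pmat k m).submatrix id (finRotate (2*k+1))) i i = 1 := by
    apply Finset.prod_eq_one
    intro i _
    have hi2 : (i:ℕ) < 2*k+1 := i.isLt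
    simp only [Matrix.submatrix_apply, id_eq, Pmat, Matrix.of_apply]
    rcases Nat.lt_or_ge (i:ℕ) (2*k) with h | h
    · have hv : ((finRotate (2*k+1)) i : ℕ) = (i:ℕ)+1 := by
        rw [hval i, if_neg (by omega)]
      rw [if_pos h, hv, if_pos rfl]
    · have h0 : (i:ℕ) = 2*k := by omega
      have hv : ((finRotate (2*k+1)) i : ℕ) = 0 := by
        rw [hval i, if_pos h0]
      rw [if_neg (by omega), hv, pow_zero]
  have hperm := Matrix.det_permute' (finRotate (2*k+1)) (Pmat k m)
  have hsgn : Equiv.Perm.sign (finRotate (2*k+1)) = 1 := by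
    rw [sign_finRotate]
    exact Even.neg_one_pow ⟨k, by omega⟩
  rw [hdet, hdiag, hsgn] at hperm
  simpa using hperm.symm

lemma Lmat_mul (k : ℕ) (m : ℤ) :
    Lmat k m * twistedCirc (2*k+1) (m^(2*k+1)+1) (fun i => m^(2*k - i)) = Pmat k m := by
  ext i j
  rw [Matrix.mul_apply]
  have hiN : (i:ℕ) < 2*k+1 := i.isLt
  have hjN : (j:ℕ) < 2*k+1 := j.isLt
  by_cases hi : (i:ℕ) < 2*k
  · have i' : Fin (2*k+1) := ⟨(i:ℕ)+1, by omega⟩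
    set i' : Fin (2*k+1) := ⟨(i:ℕ)+1, by omega⟩ with hi'def
    have hival : (i':ℕ) = (i:ℕ)+1 := rfl
    have hne : i ≠ i' := by
      intro h
      have := congrArg Fin.val h
      omega
    have hzero : ∀ x ∈ (Finset.univ : Finset (Fin (2*k+1))), x ∉ ({i, i'} : Finset (Fin (2*k+1))) →
        Lmat k m i x * twistedCirc (2*k+1) (m^(2*k+1)+1) (fun t => m^(2*k - t)) x j = 0 := by
      intro x _ hx
      simp only [Finset.mem_insert, Finset.mem_singleton, not_or] at hx
      have h1 : (i:ℕ) ≠ (x:ℕ) := fun h => hx.1 (Fin.ext h).symm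
      have h2 : (x:ℕ) ≠ (i:ℕ)+1 := fun h => hx.2 (Fin.ext (h.trans hival.symm))
      simp only [Lmat, Matrix.of_apply]
      rw [if_neg h1, if_neg h2, zero_mul]
    rw [← Finset.sum_subset (Finset.subset_univ ({i, i'} : Finset (Fin (2*k+1)))) hzero,
      Finset.sum_pair hne]
    have e1 : Lmat k m i i = 1 := by simp [Lmat]
    have e2 : Lmat k m i i' = -m := by
      simp only [Lmat, Matrix.of_apply, hival]
      simp
    rw [e1, e2, one_mul]
    simp only [twistedCirc, Matrix.of_apply, Pmat, hival]
    rw [if_pos hi]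
    rcases lt_trichotomy ((j:ℕ)) ((i:ℕ)+1) with h | h | h
    · rw [if_pos (by omega), if_pos (by omega), if_neg (by omega)]
      have he : 2*k - ((i:ℕ) - (j:ℕ)) = (2*k - ((i:ℕ)+1 - (j:ℕ))) + 1 := by omega
      rw [he, pow_succ]
      ring
    · rw [if_neg (by omega), if_pos (by omega), if_pos h]
      have he1 : 2*k - (2*k+1 + (i:ℕ) - (j:ℕ)) = 0 := by omega
      have he2 : 2*k - ((i:ℕ)+1 - (j:ℕ)) = 2*k := by omega
      rw [he1, he2, pow_zero, pow_succ]
      ring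
    · rw [if_neg (by omega), if_neg (by omega), if_neg (by omega)]
      have he : 2*k - (2*k+1 + (i:ℕ) - (j:ℕ)) = (2*k - (2*k+1 + ((i:ℕ)+1) - (j:ℕ))) + 1 := by
        omega
      rw [he, pow_succ]
      ring
  · have h0 : (i:ℕ) = 2*k := by omega
    rw [Finset.sum_eq_single i]
    · have e1 : Lmat k m i i = 1 := by simp [Lmat]
      rw [e1, one_mul]
      simp only [twistedCirc, Matrix.of_apply, Pmat]
      rw [if_pos (by omega), if_neg (by omega)]
      congr 1
      omega
    · intro x _ hx
      have h1 : (i:ℕ) ≠ (x:ℕ) := fun h => hx (Fin.ext h).symm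
      have h2 : (x:ℕ) ≠ (i:ℕ)+1 := by omega
      simp only [Lmat, Matrix.of_apply]
      rw [if_neg h1, if_neg h2, zero_mul]
    · intro h
      exact absurd (Finset.mem_univ i) h

lemma aux_det (k : ℕ) (m : ℤ) :
    (twistedCirc (2*k+1) (m^(2*k+1)+1) (fun i => m^(2*k - i))).det = 1 := by
  have h := congrArg Matrix.det (Lmat_mul k m)
  rw [Matrix.det_mul, Lmat_det, Pmat_det, one_mul] at h
  exact h

/-- `(m^{2n-2}, m^{2n-3}, …, m, 1)` solves `|F(2n-1, m^{2n-1} + 1)| = 1`. -/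
theorem det_twistedCirc_odd_pow_plus_one (n : ℕ) (hn : 2 ≤ n) (m : ℤ) :
    (twistedCirc (2 * n - 1) (m ^ (2 * n - 1) + 1) (fun i => m ^ (2 * n - 2 - i))).det = 1 := by
  have h1 : 2 * n - 1 = 2 * (n-1) + 1 := by omega
  have h2 : 2 * n - 2 = 2 * (n-1) := by omega
  rw [h1, h2]
  exact aux_det (n-1) m
end

section
/- For every integer n ≥ 1 and every integer m, the determinant of the (m^{2n}+1)-twisted circulant matrix X(2n, m^{2n}+1, s) with s_i = m^{2n−1−i} for i = 0, …, 2n−1 (i.e. s = (m^{2n−1}, m^{2n−2}, …, m, 1)) equals −1. -/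
private lemma aux_det_twisted (K : ℕ) (hK : 1 ≤ K) (m : ℤ) :
    (twistedCirc (K + 1) (m ^ (K + 1) + 1) (fun i => m ^ (K - i))).det = (-1) ^ K := by
  set M : ℤ := m ^ (K + 1) + 1 with hM
  set A : Matrix (Fin (K + 1)) (Fin (K + 1)) ℤ :=
    twistedCirc (K + 1) M (fun i => m ^ (K - i)) with hA
  set E : Matrix (Fin (K + 1)) (Fin (K + 1)) ℤ :=
    Matrix.of (fun i j => if j = i then 1 else if (j : ℕ) = (i : ℕ) + 1 then -m else 0) with hE
  set U : Matrix (Fin (K + 1)) (Fin (K + 1)) ℤ :=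
    Matrix.of (fun i j => if i = 0 then m ^ (j : ℕ) else if j = i then 1 else 0) with hU
  have hdetE : E.det = 1 := by
    rw [Matrix.det_of_upperTriangular]
    · have h1 : ∀ i : Fin (K + 1), E i i = 1 := by
        intro i; simp [hE]
      simp [h1]
    · intro i j hij
      simp only [id] at hij
      have hij' : (j : ℕ) < (i : ℕ) := hij
      simp only [hE, Matrix.of_apply]
      rw [if_neg (by simp [Fin.ext_iff]; omega), if_neg (by omega)]
  have hdetU : U.det = 1 := by
    rw [Matrix.det_of_upperTriangular]
    · have h1 : ∀ i : Fin (K + 1), U i i = 1 := by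
        intro i
        by_cases h : i = 0
        · subst h; simp [hU]
        · simp [hU, h]
      simp [h1]
    · intro i j hij
      simp only [id] at hij
      have hij' : (j : ℕ) < (i : ℕ) := hij
      simp only [hU, Matrix.of_apply]
      rw [if_neg (show ¬ i = 0 from fun h => by rw [h] at hij'; simp at hij'), if_neg (by simp [Fin.ext_iff]; omega)]
  have hEA : E * A = U.submatrix (finRotate (K + 1)) id := by
    ext i j
    rw [Matrix.mul_apply, Matrix.submatrix_apply, id]
    by_cases hi : (i : ℕ) = K
    · -- last row
      have hsum : ∀ k, E i k * A k j = if i = k then A k j else 0 := by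
        intro k
        by_cases hk : k = i
        · subst hk; simp [hE]
        · have hk2 : (k : ℕ) ≠ (i : ℕ) + 1 := by have := k.isLt; omega
          simp [hE, hk, Ne.symm hk, hk2]
      rw [Finset.sum_congr rfl (fun k _ => hsum k), Finset.sum_ite_eq]
      simp only [Finset.mem_univ, if_true]
      have hil : i = Fin.last K := Fin.ext (by simpa using hi)
      have hσ : finRotate (K + 1) i = 0 := by
        rw [hil, finRotate_succ_apply, Fin.last_add_one]
      rw [hσ]
      have hj : (j : ℕ) ≤ (i : ℕ) := by have := j.isLt; omega
      simp only [hA, twistedCirc, Matrix.of_apply, hU, if_pos hj, if_pos rfl]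
      congr 1
      omega
    · -- rows 0..K-1
      have hi' : (i : ℕ) + 1 < K + 1 := by have := i.isLt; omega
      set i' : Fin (K + 1) := ⟨(i : ℕ) + 1, hi'⟩ with hi'def
      have hii' : i ≠ i' := by simp [Fin.ext_iff, hi'def]
      have hsum : ∀ k, E i k * A k j =
          (if i = k then A k j else 0) + (if i' = k then -m * A k j else 0) := by
        intro k
        by_cases h1 : k = i
        · subst h1
          rw [if_pos rfl, if_neg (Ne.symm hii')]
          simp [hE]
        · by_cases h2 : k = i'
          · subst h2
            rw [if_neg (fun h => h1 h.symm), if_pos rfl]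
            have : ((i' : Fin (K + 1)) : ℕ) = (i : ℕ) + 1 := rfl
            simp [hE, hii'.symm, this]
          · have hk2 : (k : ℕ) ≠ (i : ℕ) + 1 := by
              intro h; exact h2 (Fin.ext h)
            rw [if_neg (fun h => h1 h.symm), if_neg (fun h => h2 h.symm)]
            simp [hE, h1, hk2]
      rw [Finset.sum_congr rfl (fun k _ => hsum k), Finset.sum_add_distrib,
        Finset.sum_ite_eq, Finset.sum_ite_eq]
      simp only [Finset.mem_univ, if_true]
      have hσv : ((finRotate (K + 1) i : Fin (K + 1)) : ℕ) = (i : ℕ) + 1 := by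
        rw [finRotate_succ_apply]
        exact Fin.val_add_one_of_lt (by rw [Fin.lt_def]; simpa using by omega)
      have hσ0 : finRotate (K + 1) i ≠ 0 := by
        intro h; rw [h] at hσv; simp at hσv
      simp only [hU, Matrix.of_apply, if_neg hσ0]
      have hAij : ∀ (a : Fin (K + 1)), A a j =
          if (j : ℕ) ≤ (a : ℕ) then m ^ (K - ((a : ℕ) - (j : ℕ)))
          else M * m ^ (K - ((K + 1) + (a : ℕ) - (j : ℕ))) := by
        intro a; rfl
      rw [hAij, hAij]
      have hi'v : ((i' : Fin (K + 1)) : ℕ) = (i : ℕ) + 1 := rfl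
      rcases lt_trichotomy ((j : ℕ)) ((i : ℕ) + 1) with hj | hj | hj
      · -- j ≤ i
        have hj1 : (j : ℕ) ≤ (i : ℕ) := by omega
        rw [if_pos hj1, if_pos (by omega), if_neg (fun hc => by rw [Fin.ext_iff, hσv] at hc; omega)]
        have he : K - ((i : ℕ) - (j : ℕ)) = (K - (((i' : Fin (K+1)) : ℕ) - (j : ℕ))) + 1 := by
          rw [hi'v]; omega
        rw [he, pow_succ]
        ring
      · -- j = i + 1
        rw [if_neg (by omega), if_pos (by omega), if_pos (Fin.ext (by rw [hσv]; omega))]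
        have he1 : K - ((K + 1) + (i : ℕ) - (j : ℕ)) = 0 := by omega
        have he2 : K - (((i' : Fin (K+1)) : ℕ) - (j : ℕ)) = K := by rw [hi'v]; omega
        rw [he1, he2, hM, pow_succ]
        ring
      · -- j > i + 1
        have hjK : (j : ℕ) ≤ K := by have := j.isLt; omega
        rw [if_neg (by omega), if_neg (by omega),
          if_neg (fun hc => by rw [Fin.ext_iff, hσv] at hc; omega)]
        have he : K - ((K + 1) + (i : ℕ) - (j : ℕ)) =
            (K - ((K + 1) + ((i' : Fin (K+1)) : ℕ) - (j : ℕ))) + 1 := by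
          rw [hi'v]; omega
        rw [he, pow_succ]
        ring
  have hdet : A.det = (E * A).det := by
    rw [Matrix.det_mul, hdetE, one_mul]
  rw [hdet, hEA, Matrix.det_permute, hdetU, mul_one, sign_finRotate]
  push_cast
  ring

/-- `(m^{2n-1}, m^{2n-2}, …, m, 1)` solves `|F(2n, m^{2n} + 1)| = -1`. -/
theorem det_twistedCirc_even_pow_plus_one (n : ℕ) (hn : 1 ≤ n) (m : ℤ) :
    (twistedCirc (2 * n) (m ^ (2 * n) + 1) (fun i => m ^ (2 * n - 1 - i))).det = -1 := by
  have h := aux_det_twisted (2 * n - 1) (by omega) m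
  have hK : 2 * n - 1 + 1 = 2 * n := by omega
  rw [hK] at h
  rw [h]
  exact Odd.neg_one_pow ⟨n - 1, by omega⟩
end

section
/- Let k and n be rational numbers with n ≠ 0, and set p = k²n. If m = (k/n)(p − 3), s_0 = (p−2)(p−1) − 1, s_1 = kn(p−2), and s_2 = n(p−1), then s_0³ + m s_1³ + m² s_2³ − 3 m s_0 s_1 s_2 = 1; that is, (s_0, s_1, s_2) solves the generalized Pell equation |F(3,m)| = 1. -/
/-- Parametrized solutions of the generalized Pell equation `|F(3,m)| = 1`:
with `p = k²n`, `m = (k/n)(p - 3)`, `s₀ = (p-2)(p-1) - 1`, `s₁ = kn(p-2)`,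
`s₂ = n(p-1)` one has `s₀³ + m s₁³ + m² s₂³ - 3 m s₀ s₁ s₂ = 1`. -/
theorem pell3_parametrization_minus
    (k n : ℚ) (hn : n ≠ 0) (p m s₀ s₁ s₂ : ℚ)
    (hp : p = k ^ 2 * n)
    (hm : m = (k / n) * (p - 3))
    (hs₀ : s₀ = (p - 2) * (p - 1) - 1)
    (hs₁ : s₁ = k * n * (p - 2))
    (hs₂ : s₂ = n * (p - 1)) :
    s₀ ^ 3 + m * s₁ ^ 3 + m ^ 2 * s₂ ^ 3 - 3 * m * s₀ * s₁ * s₂ = 1 := by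
  subst hp hm hs₀ hs₁ hs₂
  field_simp
  ring
end

section
/- Let k and n be rational numbers with n ≠ 0, and set p = k²n. If m = (k/n)(p + 3), s_0 = (p+2)(p+1) − 1, s_1 = kn(p+2), and s_2 = n(p+1), then s_0³ + m s_1³ + m² s_2³ − 3 m s_0 s_1 s_2 = 1; that is, (s_0, s_1, s_2) solves the generalized Pell equation |F(3,m)| = 1. -/
/-- Parametrized solutions of the generalized Pell equation `|F(3,m)| = 1`:
with `p = k²n`, `m = (k/n)(p + 3)`, `s₀ = (p+2)(p+1) - 1`, `s₁ = kn(p+2)`,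
`s₂ = n(p+1)` one has `s₀³ + m s₁³ + m² s₂³ - 3 m s₀ s₁ s₂ = 1`. -/
theorem pell3_parametrization_plus
    (k n : ℚ) (hn : n ≠ 0) (p m s₀ s₁ s₂ : ℚ)
    (hp : p = k ^ 2 * n)
    (hm : m = (k / n) * (p + 3))
    (hs₀ : s₀ = (p + 2) * (p + 1) - 1)
    (hs₁ : s₁ = k * n * (p + 2))
    (hs₂ : s₂ = n * (p + 1)) :
    s₀ ^ 3 + m * s₁ ^ 3 + m ^ 2 * s₂ ^ 3 - 3 * m * s₀ * s₁ * s₂ = 1 := by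
  subst hp hm hs₀ hs₁ hs₂
  field_simp
  ring
end

section
/- Let k and n be rational numbers with n ≠ 0, and set p = k²n. If m = (k/n)(p − 3), s_0 = 1, s_1 = −nk, and s_2 = n, then s_0³ + m s_1³ + m² s_2³ − 3 m s_0 s_1 s_2 = 1; likewise, if m = (k/n)(p + 3), s_0 = 1, s_1 = nk, and s_2 = −n, then s_0³ + m s_1³ + m² s_2³ − 3 m s_0 s_1 s_2 = 1 (these are the conjugate solutions of |F(3,m)| = 1). -/
/-- Conjugate solutions of the generalized Pell equation `|F(3,m)| = 1`: with
`p = k²n`, both `(m, s₀, s₁, s₂) = ((k/n)(p-3), 1, -nk, n)` and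
`(m, s₀, s₁, s₂) = ((k/n)(p+3), 1, nk, -n)` satisfy
`s₀³ + m s₁³ + m² s₂³ - 3 m s₀ s₁ s₂ = 1`. -/
theorem pell3_conjugate_solutions
    (k n : ℚ) (hn : n ≠ 0) (p : ℚ) (hp : p = k ^ 2 * n) :
    ((1 : ℚ) ^ 3 + ((k / n) * (p - 3)) * (-(n * k)) ^ 3
        + ((k / n) * (p - 3)) ^ 2 * n ^ 3
        - 3 * ((k / n) * (p - 3)) * 1 * (-(n * k)) * n = 1) ∧
      ((1 : ℚ) ^ 3 + ((k / n) * (p + 3)) * (n * k) ^ 3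
        + ((k / n) * (p + 3)) ^ 2 * (-n) ^ 3
        - 3 * ((k / n) * (p + 3)) * 1 * (n * k) * (-n) = 1) := by
  subst hp; constructor <;> field_simp <;> ring
end

section
/- Let k and r be rational numbers with r ≠ 0, and set m = (k/r)(r k⁴ − 5). Then the vector s = (s_0, s_1, s_2, s_3, s_4) = (1, −r k³, 2r k², −2r k, r) satisfies det X(5, m, s) = 1, i.e. it solves the generalized Pell equation |F(5,m)| = 1. -/
lemma twistedCirc5_eq {R : Type*} [CommRing R] (M : R) (s : ℕ → R) :
    twistedCirc 5 M s =
      !![s 0, M * s 4, M * s 3, M * s 2, M * s 1;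
         s 1, s 0, M * s 4, M * s 3, M * s 2;
         s 2, s 1, s 0, M * s 4, M * s 3;
         s 3, s 2, s 1, s 0, M * s 4;
         s 4, s 3, s 2, s 1, s 0] := by
  ext i j
  fin_cases i <;> fin_cases j <;> rfl

set_option maxHeartbeats 12000000 in
set_option maxRecDepth 100000 in
/-- With `m = (k/r)(r k⁴ - 5)`, the vector `(1, -r k³, 2r k², -2r k, r)` solves the
generalized Pell equation `|F(5,m)| = 1`. -/
theorem pell5_parametrization
    (k r : ℚ) (hr : r ≠ 0) (m : ℚ) (hm : m = (k / r) * (r * k ^ 4 - 5)) :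
    (twistedCirc 5 m (fun i =>
      match i with
      | 0 => 1
      | 1 => -(r * k ^ 3)
      | 2 => 2 * r * k ^ 2
      | 3 => -(2 * r * k)
      | 4 => r
      | _ => 0)).det = 1 := by
  subst hm
  rw [twistedCirc5_eq]
  simp (decide := true) [Matrix.det_succ_row_zero, Fin.sum_univ_succ, Fin.succAbove]
  field_simp
  ring
end
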